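/- arXiv:1507.08464 — 4 statements merged into one kernel-verified Lean document; each statement's English description precedes it below -/
import Mathlib

section
/- (Abstract Babuška–Aziz implies Friedrichs–Velte.) Let X, Y, Z be Hilbert spaces and B : X → Y, R : X → Z bounded linear operators satisfying ‖v‖_X² = ‖Bv‖_Y² + ‖Rv‖_Z² for all v ∈ X. Suppose there is a constant C ≥ 1 such that every q ∈ (ker B*)^⊥ admits v ∈ X with Bv = q and ‖v‖_X² ≤ C‖q‖_Y². Then for all h ∈ Y and g ∈ Z with B*h = R*g and h ∈ (ker B*)^⊥, one has ‖h‖_Y² ≤ (C − 1)·‖g‖_Z². -/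
open scoped RealInnerProductSpace

/-- Abstract Babuška–Aziz implies Friedrichs–Velte: if `‖v‖² = ‖Bv‖² + ‖Rv‖²` and every
`q ∈ (ker B*)ᗮ` has a preimage `v` with `Bv = q`, `‖v‖² ≤ C‖q‖²`, then every conjugate
pair `B*h = R*g` with `h ∈ (ker B*)ᗮ` satisfies `‖h‖² ≤ (C-1)‖g‖²`. -/
theorem babuska_aziz_implies_friedrichs_velte
    {X Y Z : Type*} [NormedAddCommGroup X] [InnerProductSpace ℝ X] [CompleteSpace X]
    [NormedAddCommGroup Y] [InnerProductSpace ℝ Y] [CompleteSpace Y]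
    [NormedAddCommGroup Z] [InnerProductSpace ℝ Z] [CompleteSpace Z]
    (B : X →L[ℝ] Y) (R : X →L[ℝ] Z)
    (hnorm : ∀ v : X, ‖v‖ ^ 2 = ‖B v‖ ^ 2 + ‖R v‖ ^ 2)
    (C : ℝ) (hC : 1 ≤ C)
    (hBA : ∀ q ∈ (LinearMap.ker (ContinuousLinearMap.adjoint B : Y →ₗ[ℝ] X))ᗮ,
      ∃ v : X, B v = q ∧ ‖v‖ ^ 2 ≤ C * ‖q‖ ^ 2) :
    ∀ (h : Y) (g : Z), h ∈ (LinearMap.ker (ContinuousLinearMap.adjoint B : Y →ₗ[ℝ] X))ᗮ →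
      ContinuousLinearMap.adjoint B h = ContinuousLinearMap.adjoint R g →
      ‖h‖ ^ 2 ≤ (C - 1) * ‖g‖ ^ 2 := by
  intro h g hperp hconj
  obtain ⟨v, hBv, hv⟩ := hBA h hperp
  have h1 : ‖h‖ ^ 2 = ⟪g, R v⟫ := by
    have e : ⟪h, B v⟫ = ⟪g, R v⟫ := by
      rw [← ContinuousLinearMap.adjoint_inner_left B, hconj,
        ContinuousLinearMap.adjoint_inner_left]
    rw [← e, hBv, real_inner_self_eq_norm_sq]
  have h2 : ‖R v‖ ^ 2 ≤ (C - 1) * ‖h‖ ^ 2 := by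
    have := hnorm v
    rw [hBv] at this
    nlinarith
  have h3 : ⟪g, R v⟫ ≤ ‖g‖ * ‖R v‖ := real_inner_le_norm g (R v)
  rcases eq_or_lt_of_le (norm_nonneg h) with h0 | h0
  · nlinarith [norm_nonneg g]
  · have h4 : (‖h‖ ^ 2) ^ 2 ≤ (‖g‖ * ‖R v‖) ^ 2 := by
      apply pow_le_pow_left₀ (by positivity) (by linarith) 2
    have h5 : (‖g‖ * ‖R v‖) ^ 2 ≤ ‖g‖ ^ 2 * ((C - 1) * ‖h‖ ^ 2) := by
      rw [mul_pow]
      exact mul_le_mul_of_nonneg_left h2 (by positivity)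
    have h6 : 0 < ‖h‖ ^ 2 := by positivity
    have := mul_pos h6 (show (0:ℝ) < ‖h‖ ^ 2 from h6)
    nlinarith
end

section
/- (Abstract Friedrichs–Velte implies Babuška–Aziz.) Let X, Y, Z be Hilbert spaces and B : X → Y, R : X → Z bounded linear operators satisfying ‖v‖_X² = ‖Bv‖_Y² + ‖Rv‖_Z² for all v ∈ X. Suppose there is Γ ≥ 0 such that whenever h ∈ (ker B*)^⊥ and g ∈ Z satisfy B*h = R*g, then ‖h‖_Y² ≤ Γ‖g‖_Z². Then the inf-sup condition holds: for every p ∈ (ker B*)^⊥, sup_{v ∈ X, v ≠ 0} ⟨p, Bv⟩/‖v‖_X ≥ (Γ + 1)^{−1/2} ‖p‖_Y. -/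
open scoped RealInnerProductSpace

/-- Abstract Friedrichs–Velte implies Babuška–Aziz (inf-sup form): if `‖v‖² = ‖Bv‖² + ‖Rv‖²`
and every conjugate pair `(h, g)` with `h ∈ (ker B*)ᗮ` satisfies `‖h‖² ≤ Γ‖g‖²`, then
for every `p ∈ (ker B*)ᗮ`, `sup_{v ≠ 0} ⟪p, Bv⟫/‖v‖ ≥ (Γ+1)^{-1/2} ‖p‖`. -/
theorem friedrichs_velte_implies_inf_sup
    {X Y Z : Type*} [NormedAddCommGroup X] [InnerProductSpace ℝ X] [CompleteSpace X]
    [NormedAddCommGroup Y] [InnerProductSpace ℝ Y] [CompleteSpace Y]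
    [NormedAddCommGroup Z] [InnerProductSpace ℝ Z] [CompleteSpace Z]
    (B : X →L[ℝ] Y) (R : X →L[ℝ] Z)
    (hnorm : ∀ v : X, ‖v‖ ^ 2 = ‖B v‖ ^ 2 + ‖R v‖ ^ 2)
    (Γ : ℝ) (hΓ : 0 ≤ Γ)
    (hFV : ∀ (h : Y) (g : Z), h ∈ (LinearMap.ker (ContinuousLinearMap.adjoint B : Y →ₗ[ℝ] X))ᗮ →
      ContinuousLinearMap.adjoint B h = ContinuousLinearMap.adjoint R g →
      ‖h‖ ^ 2 ≤ Γ * ‖g‖ ^ 2) :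
    ∀ p ∈ (LinearMap.ker (ContinuousLinearMap.adjoint B : Y →ₗ[ℝ] X))ᗮ,
      sSup {r : ℝ | ∃ v : X, v ≠ 0 ∧ r = ⟪p, B v⟫ / ‖v‖} ≥ ‖p‖ / Real.sqrt (Γ + 1) := by
  intro p hp
  set u : X := ContinuousLinearMap.adjoint B p with hu
  -- polarization identity for the splitting of the norm
  have key : ∀ v : X, ⟪p, B v⟫ = ⟪B u, B v⟫ + ⟪R u, R v⟫ := by
    intro v
    have h1 := hnorm (u + v)
    have h2 := hnorm u
    have h3 := hnorm v
    have e1 : ‖u + v‖ ^ 2 = ‖u‖ ^ 2 + 2 * ⟪u, v⟫ + ‖v‖ ^ 2 := by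
      rw [norm_add_sq_real]
    have e2 : ‖B (u + v)‖ ^ 2 = ‖B u‖ ^ 2 + 2 * ⟪B u, B v⟫ + ‖B v‖ ^ 2 := by
      rw [map_add, norm_add_sq_real]
    have e3 : ‖R (u + v)‖ ^ 2 = ‖R u‖ ^ 2 + 2 * ⟪R u, R v⟫ + ‖R v‖ ^ 2 := by
      rw [map_add, norm_add_sq_real]
    have hadj : ⟪u, v⟫ = ⟪p, B v⟫ := ContinuousLinearMap.adjoint_inner_left B v p
    rw [e1, e2, e3] at h1
    linarith
  -- the conjugate pair (p - B u, R u)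
  have hconj : ContinuousLinearMap.adjoint B (p - B u) = ContinuousLinearMap.adjoint R (R u) := by
    apply ext_inner_right ℝ
    intro v
    rw [ContinuousLinearMap.adjoint_inner_left, ContinuousLinearMap.adjoint_inner_left,
      inner_sub_left, key v]
    ring
  have hmem : p - B u ∈ (LinearMap.ker (ContinuousLinearMap.adjoint B : Y →ₗ[ℝ] X))ᗮ := by
    rw [Submodule.mem_orthogonal]
    intro y hy
    have hy0 : ContinuousLinearMap.adjoint B y = 0 := hy
    have h1 : ⟪y, p⟫ = 0 := (Submodule.mem_orthogonal _ p).1 hp y hy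
    have h2 : ⟪y, B u⟫ = 0 := by
      rw [← ContinuousLinearMap.adjoint_inner_left B u y, hy0, inner_zero_left]
    rw [inner_sub_right, h1, h2]; ring
  have hFVh := hFV (p - B u) (R u) hmem hconj
  -- ⟪p - B u, B u⟫ = ‖R u‖²
  have hinner : ⟪p - B u, B u⟫ = ‖R u‖ ^ 2 := by
    rw [inner_sub_left, key u]
    simp [real_inner_self_eq_norm_sq]
  have hCS : ‖R u‖ ^ 2 ≤ ‖p - B u‖ * ‖B u‖ := by
    rw [← hinner]; exact real_inner_le_norm _ _
  -- ‖p‖² = ‖B u‖² + 2‖R u‖² + ‖p - B u‖²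
  have hp2 : ‖p‖ ^ 2 = ‖B u‖ ^ 2 + 2 * ‖R u‖ ^ 2 + ‖p - B u‖ ^ 2 := by
    have : p = B u + (p - B u) := by abel
    calc ‖p‖ ^ 2 = ‖B u + (p - B u)‖ ^ 2 := by rw [← this]
      _ = ‖B u‖ ^ 2 + 2 * ⟪B u, p - B u⟫ + ‖p - B u‖ ^ 2 := by
          rw [norm_add_sq_real]
      _ = ‖B u‖ ^ 2 + 2 * ‖R u‖ ^ 2 + ‖p - B u‖ ^ 2 := by
          rw [real_inner_comm, hinner]
  -- main estimate : ‖p‖² ≤ (Γ+1) ‖u‖²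
  have hmain : ‖p‖ ^ 2 ≤ (Γ + 1) * ‖u‖ ^ 2 := by
    have hA : (0:ℝ) ≤ ‖B u‖ ^ 2 := sq_nonneg _
    have hRr : (0:ℝ) ≤ ‖R u‖ ^ 2 := sq_nonneg _
    have hH : (0:ℝ) ≤ ‖p - B u‖ ^ 2 := sq_nonneg _
    have hCS2 : (‖R u‖ ^ 2) ^ 2 ≤ ‖p - B u‖ ^ 2 * ‖B u‖ ^ 2 := by
      have := mul_self_le_mul_self hRr hCS
      nlinarith [this]
    rw [hp2, hnorm u]
    -- goal : ‖B u‖² + 2‖R u‖² + ‖p-Bu‖² ≤ (Γ+1)(‖Bu‖² + ‖Ru‖²)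
    rcases eq_or_lt_of_le hRr with hzero | hpos
    · -- ‖R u‖² = 0
      have h0 : ‖R u‖ ^ 2 = 0 := hzero.symm
      have hH0 : ‖p - B u‖ ^ 2 = 0 := le_antisymm (by nlinarith) hH
      nlinarith
    · -- ‖R u‖² > 0 : divide the multiplied inequality
      have hstep : (Γ * ‖B u‖ ^ 2 + Γ * ‖R u‖ ^ 2 - ‖R u‖ ^ 2 - ‖p - B u‖ ^ 2) * ‖R u‖ ^ 2 ≥ 0 := by
        nlinarith [mul_nonneg (sub_nonneg.2 hFVh) (add_nonneg hA hRr)]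
      nlinarith [hstep, hpos]
  rcases eq_or_ne u 0 with hu0 | hu0
  · -- then p = 0
    have hpker : p ∈ LinearMap.ker (ContinuousLinearMap.adjoint B : Y →ₗ[ℝ] X) := by
      simpa [LinearMap.mem_ker] using hu0
    have hp0 : p = 0 := by
      have := Submodule.inner_right_of_mem_orthogonal hpker hp
      rwa [real_inner_self_eq_norm_sq, pow_eq_zero_iff (by norm_num), norm_eq_zero] at this
    subst hp0
    simp only [norm_zero, zero_div, ge_iff_le]
    by_cases hne : ({r : ℝ | ∃ v : X, v ≠ 0 ∧ r = ⟪(0:Y), B v⟫ / ‖v‖}).Nonempty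
    · obtain ⟨r, v, hv, hr⟩ := hne
      have hr0 : r = 0 := by simp [hr]
      have hbdd : BddAbove {r : ℝ | ∃ v : X, v ≠ 0 ∧ r = ⟪(0:Y), B v⟫ / ‖v‖} := by
        refine ⟨0, ?_⟩
        rintro s ⟨w, hw, hs⟩
        simp [hs]
      have := le_csSup hbdd (show r ∈ _ from ⟨v, hv, hr⟩)
      linarith [hr0 ▸ this]
    · rw [Set.not_nonempty_iff_eq_empty] at hne
      rw [hne, Real.sSup_empty]
  · -- u ≠ 0 gives the element ‖u‖ of the set
    have hun : (0:ℝ) < ‖u‖ := norm_pos_iff.2 hu0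
    have hmemset : ‖u‖ ∈ {r : ℝ | ∃ v : X, v ≠ 0 ∧ r = ⟪p, B v⟫ / ‖v‖} := by
      refine ⟨u, hu0, ?_⟩
      rw [key u, real_inner_self_eq_norm_sq, real_inner_self_eq_norm_sq, ← hnorm u]
      field_simp
    have hbdd : BddAbove {r : ℝ | ∃ v : X, v ≠ 0 ∧ r = ⟪p, B v⟫ / ‖v‖} := by
      refine ⟨‖p‖ * ‖B‖, ?_⟩
      rintro s ⟨w, hw, hs⟩
      have hwpos : (0:ℝ) < ‖w‖ := norm_pos_iff.2 hw
      rw [hs, div_le_iff₀ hwpos]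
      calc ⟪p, B w⟫ ≤ ‖p‖ * ‖B w‖ := real_inner_le_norm _ _
        _ ≤ ‖p‖ * (‖B‖ * ‖w‖) :=
            mul_le_mul_of_nonneg_left (B.le_opNorm w) (norm_nonneg _)
        _ = ‖p‖ * ‖B‖ * ‖w‖ := by ring
    have hle := le_csSup hbdd hmemset
    have hsq : (0:ℝ) < Real.sqrt (Γ + 1) := Real.sqrt_pos.2 (by linarith)
    have hfinal : ‖p‖ / Real.sqrt (Γ + 1) ≤ ‖u‖ := by
      rw [div_le_iff₀ hsq]
      have h1 : ‖p‖ ^ 2 ≤ (‖u‖ * Real.sqrt (Γ + 1)) ^ 2 := by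
        rw [mul_pow, Real.sq_sqrt (by linarith : (0:ℝ) ≤ Γ + 1)]
        nlinarith [hmain]
      have h2 : (0:ℝ) ≤ ‖u‖ * Real.sqrt (Γ + 1) := by positivity
      nlinarith [norm_nonneg p]
    linarith
end

section
/- (Equality of optimal constants, abstract form.) Let X, Y, Z be Hilbert spaces and B : X → Y, R : X → Z bounded operators with ‖v‖_X² = ‖Bv‖_Y² + ‖Rv‖_Z² for all v ∈ X. Define C as the smallest constant such that every q ∈ (ker B*)^⊥ has a preimage v with Bv = q, ‖v‖_X² ≤ C‖q‖_Y², and define Γ as the smallest constant such that ‖h‖_Y² ≤ Γ‖g‖_Z² for all conjugate pairs (B*h = R*g) with h ∈ (ker B*)^⊥ (both constants possibly infinite). Then C is finite if and only if Γ is finite, and in that case C = Γ + 1. -/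
open scoped RealInnerProductSpace

set_option linter.unusedSectionVars false
open ContinuousLinearMap
set_option maxHeartbeats 1000000

section aux

variable {X Y Z : Type*} [NormedAddCommGroup X] [InnerProductSpace ℝ X] [CompleteSpace X]
    [NormedAddCommGroup Y] [InnerProductSpace ℝ Y] [CompleteSpace Y]
    [NormedAddCommGroup Z] [InnerProductSpace ℝ Z] [CompleteSpace Z]
    (B : X →L[ℝ] Y) (R : X →L[ℝ] Z)

lemma aux_polar (hnorm : ∀ v : X, ‖v‖ ^ 2 = ‖B v‖ ^ 2 + ‖R v‖ ^ 2) (v w : X) :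
    ⟪B v, B w⟫ + ⟪R v, R w⟫ = ⟪v, w⟫ := by
  have h1 := hnorm (v + w)
  have h2 := hnorm v
  have h3 := hnorm w
  simp only [map_add] at h1
  rw [norm_add_sq_real, norm_add_sq_real, norm_add_sq_real] at h1
  linarith

lemma aux_rstarr (hnorm : ∀ v : X, ‖v‖ ^ 2 = ‖B v‖ ^ 2 + ‖R v‖ ^ 2) (v : X) :
    (adjoint R) (R v) = v - (adjoint B) (B v) := by
  apply ext_inner_right ℝ
  intro w
  rw [adjoint_inner_left, inner_sub_left, adjoint_inner_left]
  have := aux_polar B R hnorm v w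
  linarith [this]

lemma aux_memK (v : X) : B v ∈ (LinearMap.ker (adjoint B : Y →ₗ[ℝ] X))ᗮ := by
  rw [Submodule.mem_orthogonal]
  intro u hu
  rw [LinearMap.mem_ker] at hu
  rw [real_inner_comm, ← adjoint_inner_right, (show adjoint B u = 0 from hu), inner_zero_right]

end aux

section aux2

variable {X Y Z : Type*} [NormedAddCommGroup X] [InnerProductSpace ℝ X] [CompleteSpace X]
    [NormedAddCommGroup Y] [InnerProductSpace ℝ Y] [CompleteSpace Y]
    [NormedAddCommGroup Z] [InnerProductSpace ℝ Z] [CompleteSpace Z]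
    (B : X →L[ℝ] Y) (R : X →L[ℝ] Z)

lemma aux_coercive (hnorm : ∀ v : X, ‖v‖ ^ 2 = ‖B v‖ ^ 2 + ‖R v‖ ^ 2) (Γ : ℝ) (hΓ0 : 0 ≤ Γ)
    (hΓ : ∀ (h : Y) (g : Z), h ∈ (LinearMap.ker (adjoint B : Y →ₗ[ℝ] X))ᗮ →
      adjoint B h = adjoint R g → ‖h‖ ^ 2 ≤ Γ * ‖g‖ ^ 2)
    (h : Y) (hh : h ∈ (LinearMap.ker (adjoint B : Y →ₗ[ℝ] X))ᗮ) :
    ‖h‖ ^ 2 ≤ (Γ + 1) * ‖(adjoint B) h‖ ^ 2 := by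
  set u := (adjoint B) h with hu
  set t := h - B u with ht
  have htK : t ∈ (LinearMap.ker (adjoint B : Y →ₗ[ℝ] X))ᗮ := Submodule.sub_mem _ hh (aux_memK B u)
  have hAt : adjoint B t = adjoint R (R u) := by
    rw [ht, map_sub, aux_rstarr B R hnorm u, hu]
  have key : ‖t‖ ^ 2 ≤ Γ * ‖R u‖ ^ 2 := hΓ t (R u) htK hAt
  have e1 : ‖R u‖ ^ 2 = ‖u‖ ^ 2 - ‖B u‖ ^ 2 := by linarith [hnorm u]
  have e2 : ⟪h, B u⟫ = ‖u‖ ^ 2 := by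
    rw [real_inner_comm, ← adjoint_inner_right, ← hu, real_inner_self_eq_norm_sq]
  have e3 : ‖t‖ ^ 2 = ‖h‖ ^ 2 - 2 * ‖u‖ ^ 2 + ‖B u‖ ^ 2 := by
    rw [ht, norm_sub_sq_real, e2]
  have e4 : ⟪t, h⟫ = ‖h‖ ^ 2 - ‖u‖ ^ 2 := by
    rw [ht, inner_sub_left, real_inner_self_eq_norm_sq, real_inner_comm h (B u), ← e2]
  have cs : ⟪t, h⟫ ≤ ‖t‖ * ‖h‖ := real_inner_le_norm t h
  have step1 : (Γ + 1) * (‖t‖ * ‖t‖) ≤ Γ * (‖h‖ ^ 2 - ‖u‖ ^ 2) := by nlinarith [key, e1, e3]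
  rcases eq_or_lt_of_le (norm_nonneg t) with h0 | h0
  · have ht0 : ‖t‖ = 0 := h0.symm
    have hth : ⟪t, h⟫ ≤ 0 := by rw [ht0] at cs; linarith
    nlinarith [e4, norm_nonneg u, sq_nonneg ‖u‖]
  · have h1 : (Γ + 1) * ‖t‖ ≤ Γ * ‖h‖ := by
      have h2 : Γ * (‖h‖ ^ 2 - ‖u‖ ^ 2) ≤ Γ * (‖t‖ * ‖h‖) := by
        rw [← e4]; exact mul_le_mul_of_nonneg_left cs hΓ0
      have h3 : (Γ + 1) * (‖t‖ * ‖t‖) ≤ Γ * (‖t‖ * ‖h‖) := le_trans step1 h2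
      nlinarith [h3, h0]
    nlinarith [mul_le_mul_of_nonneg_right h1 (norm_nonneg h), cs, e4, norm_nonneg h]

end aux2

section aux3

variable {X Y Z : Type*} [NormedAddCommGroup X] [InnerProductSpace ℝ X] [CompleteSpace X]
    [NormedAddCommGroup Y] [InnerProductSpace ℝ Y] [CompleteSpace Y]
    [NormedAddCommGroup Z] [InnerProductSpace ℝ Z] [CompleteSpace Z]
    (B : X →L[ℝ] Y) (R : X →L[ℝ] Z)

lemma aux_exists (hnorm : ∀ v : X, ‖v‖ ^ 2 = ‖B v‖ ^ 2 + ‖R v‖ ^ 2) (Γ : ℝ) (hΓ0 : 0 ≤ Γ)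
    (hΓ : ∀ (h : Y) (g : Z), h ∈ (LinearMap.ker (adjoint B : Y →ₗ[ℝ] X))ᗮ →
      adjoint B h = adjoint R g → ‖h‖ ^ 2 ≤ Γ * ‖g‖ ^ 2) :
    ∀ q ∈ (LinearMap.ker (adjoint B : Y →ₗ[ℝ] X))ᗮ,
      ∃ v : X, B v = q ∧ ‖v‖ ^ 2 ≤ (Γ + 1) * ‖q‖ ^ 2 := by
  set K := (LinearMap.ker (adjoint B : Y →ₗ[ℝ] X))ᗮ with hK
  haveI : CompleteSpace K := (Submodule.isClosed_orthogonal _).completeSpace_coe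
  set L : K →L[ℝ] X := (adjoint B).comp K.subtypeL with hL
  set S : K →L[ℝ] K := (adjoint L).comp L with hS
  have hLa : ∀ u : K, L u = adjoint B (u : Y) := fun u => rfl
  have hSin : ∀ u w : K, ⟪S u, w⟫ = ⟪L u, L w⟫ := fun u w => adjoint_inner_left L w (L u)
  have hc : (0 : ℝ) < Γ + 1 := by linarith
  have coer : ∀ u : K, ‖u‖ ^ 2 ≤ (Γ + 1) * ⟪S u, u⟫ := by
    intro u
    rw [hSin, real_inner_self_eq_norm_sq]
    have h1 : ‖(u : Y)‖ ^ 2 ≤ (Γ + 1) * ‖adjoint B (u : Y)‖ ^ 2 :=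
      aux_coercive B R hnorm Γ hΓ0 hΓ (u : Y) u.2
    simpa [hLa] using h1
  have bb : ∀ u : K, ‖u‖ ≤ (Γ + 1) * ‖S u‖ := by
    intro u
    have h1 := coer u
    have h2 : ⟪S u, u⟫ ≤ ‖S u‖ * ‖u‖ := real_inner_le_norm _ _
    rcases eq_or_lt_of_le (norm_nonneg u) with h0 | h0
    · rw [← h0]; positivity
    · nlinarith [h1, h2, norm_nonneg (S u)]
  have anti : AntilipschitzWith ⟨Γ + 1, le_of_lt hc⟩ S :=
    ContinuousLinearMap.antilipschitz_of_bound S bb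
  have hclosed : IsClosed (LinearMap.range (S : K →ₗ[ℝ] K) : Set K) :=
    anti.isClosed_range S.uniformContinuous
  have hsurj : LinearMap.range (S : K →ₗ[ℝ] K) = ⊤ := by
    haveI := hclosed.completeSpace_coe
    rw [← (LinearMap.range (S : K →ₗ[ℝ] K)).orthogonal_orthogonal, Submodule.eq_top_iff']
    intro v
    rw [Submodule.mem_orthogonal]
    intro w hw
    have h0 : ⟪S w, w⟫ = 0 := hw (S w) (LinearMap.mem_range_self _ w)
    have h1 := coer w
    rw [h0, mul_zero] at h1
    have hw0 : w = 0 := by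
      have : ‖w‖ = 0 := by nlinarith [norm_nonneg w]
      exact norm_eq_zero.mp this
    rw [hw0, inner_zero_left]
  intro q hq
  obtain ⟨h, hh⟩ : ∃ h : K, S h = ⟨q, hq⟩ := LinearMap.range_eq_top.mp hsurj ⟨q, hq⟩
  refine ⟨L h, ?_, ?_⟩
  · have hd : B (L h) - q ∈ K := Submodule.sub_mem _ (aux_memK B _) hq
    have hz : ∀ w : K, ⟪B (L h) - q, (w : Y)⟫ = 0 := by
      intro w
      rw [inner_sub_left]
      have h1 : ⟪B (L h), (w : Y)⟫ = ⟪L h, L w⟫ := by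
        rw [hLa w, ← adjoint_inner_right]
      have h2 : ⟪L h, L w⟫ = ⟪S h, w⟫ := (hSin h w).symm
      have h3 : ⟪S h, w⟫ = ⟪q, (w : Y)⟫ := by
        rw [hh, Submodule.coe_inner]
      rw [h1, h2, h3, sub_self]
    have h4 := hz ⟨_, hd⟩
    have h5 : B (L h) - q = 0 := by
      rwa [inner_self_eq_zero (𝕜 := ℝ)] at h4
    exact sub_eq_zero.mp h5
  · have hn : ‖L h‖ ^ 2 = ⟪S h, h⟫ := by
      rw [hSin, real_inner_self_eq_norm_sq]
    have hq' : ⟪S h, h⟫ = ⟪q, (h : Y)⟫ := by rw [hh, Submodule.coe_inner]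
    have hcb : ‖(h : Y)‖ ^ 2 ≤ (Γ + 1) * ⟪q, (h : Y)⟫ := by
      have := coer h
      rwa [hq'] at this
    have cs2 : ⟪q, (h : Y)⟫ ≤ ‖q‖ * ‖(h : Y)‖ := real_inner_le_norm _ _
    have hb : ‖(h : Y)‖ ≤ (Γ + 1) * ‖q‖ := by
      rcases eq_or_lt_of_le (norm_nonneg (h : Y)) with h0 | h0
      · rw [← h0]; positivity
      · nlinarith [hcb, cs2]
    rw [hn, hq']
    nlinarith [cs2, mul_le_mul_of_nonneg_left hb (norm_nonneg q), norm_nonneg q]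

end aux3

section aux4

variable {X Y Z : Type*} [NormedAddCommGroup X] [InnerProductSpace ℝ X] [CompleteSpace X]
    [NormedAddCommGroup Y] [InnerProductSpace ℝ Y] [CompleteSpace Y]
    [NormedAddCommGroup Z] [InnerProductSpace ℝ Z] [CompleteSpace Z]
    (B : X →L[ℝ] Y) (R : X →L[ℝ] Z)

lemma aux_easy (hnorm : ∀ v : X, ‖v‖ ^ 2 = ‖B v‖ ^ 2 + ‖R v‖ ^ 2) (C : ℝ) (hC1 : 1 ≤ C)
    (hC : ∀ q ∈ (LinearMap.ker (adjoint B : Y →ₗ[ℝ] X))ᗮ, ∃ v : X, B v = q ∧ ‖v‖ ^ 2 ≤ C * ‖q‖ ^ 2) :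
    ∀ (h : Y) (g : Z), h ∈ (LinearMap.ker (adjoint B : Y →ₗ[ℝ] X))ᗮ →
      adjoint B h = adjoint R g → ‖h‖ ^ 2 ≤ (C - 1) * ‖g‖ ^ 2 := by
  intro h g hh hcon
  rcases eq_or_ne h 0 with rfl | hne
  · have h0 : (0:ℝ) ≤ (C - 1) * ‖g‖ ^ 2 := mul_nonneg (by linarith) (sq_nonneg _)
    simpa using h0
  obtain ⟨v, hv, hvb⟩ := hC h hh
  have ha : (0 : ℝ) < ‖h‖ ^ 2 := pow_pos (norm_pos_iff.mpr hne) 2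
  have e1 : ‖h‖ ^ 2 = ⟪g, R v⟫ := by
    rw [← real_inner_self_eq_norm_sq]
    calc ⟪h, h⟫ = ⟪h, B v⟫ := by rw [hv]
    _ = ⟪adjoint B h, v⟫ := (adjoint_inner_left B v h).symm
    _ = ⟪adjoint R g, v⟫ := by rw [hcon]
    _ = ⟪g, R v⟫ := adjoint_inner_left R v g
  have e2 : ‖R v‖ ^ 2 ≤ (C - 1) * ‖h‖ ^ 2 := by
    have h3 := hnorm v
    rw [hv] at h3
    linarith
  have cs : ⟪g, R v⟫ ≤ ‖g‖ * ‖R v‖ := real_inner_le_norm _ _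
  have h4 : ‖h‖ ^ 2 * ‖h‖ ^ 2 ≤ (‖g‖ * ‖R v‖) * (‖g‖ * ‖R v‖) := by
    apply mul_self_le_mul_self (le_of_lt ha)
    rw [e1]; exact cs
  have h5 : (‖g‖ * ‖R v‖) * (‖g‖ * ‖R v‖) = ‖g‖ ^ 2 * ‖R v‖ ^ 2 := by ring
  have h6 : ‖g‖ ^ 2 * ‖R v‖ ^ 2 ≤ ‖g‖ ^ 2 * ((C - 1) * ‖h‖ ^ 2) :=
    mul_le_mul_of_nonneg_left e2 (sq_nonneg _)
  nlinarith [h4, h6, ha]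

end aux4


/-- Equality of optimal constants, abstract form: with `‖v‖² = ‖Bv‖² + ‖Rv‖²`, the
Babuška–Aziz constant (the smallest `C` such that every `q ∈ (ker B*)ᗮ` has a preimage
`v` with `Bv = q`, `‖v‖² ≤ C‖q‖²`) is finite if and only if the Friedrichs–Velte constant
(the smallest `Γ` with `‖h‖² ≤ Γ‖g‖²` for all conjugate pairs with `h ∈ (ker B*)ᗮ`)
is finite, and in that case `C = Γ + 1`. -/
theorem optimal_constants_equality
    {X Y Z : Type*} [NormedAddCommGroup X] [InnerProductSpace ℝ X] [CompleteSpace X]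
    [NormedAddCommGroup Y] [InnerProductSpace ℝ Y] [CompleteSpace Y]
    [NormedAddCommGroup Z] [InnerProductSpace ℝ Z] [CompleteSpace Z]
    (B : X →L[ℝ] Y) (R : X →L[ℝ] Z)
    (hnorm : ∀ v : X, ‖v‖ ^ 2 = ‖B v‖ ^ 2 + ‖R v‖ ^ 2) :
    ({C : ℝ | ∀ q ∈ (LinearMap.ker (ContinuousLinearMap.adjoint B : Y →ₗ[ℝ] X))ᗮ,
        ∃ v : X, B v = q ∧ ‖v‖ ^ 2 ≤ C * ‖q‖ ^ 2}.Nonempty ↔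
      {Γ : ℝ | ∀ (h : Y) (g : Z),
        h ∈ (LinearMap.ker (ContinuousLinearMap.adjoint B : Y →ₗ[ℝ] X))ᗮ →
        ContinuousLinearMap.adjoint B h = ContinuousLinearMap.adjoint R g →
        ‖h‖ ^ 2 ≤ Γ * ‖g‖ ^ 2}.Nonempty) ∧
    (∀ C Γ : ℝ,
      IsLeast {C : ℝ | ∀ q ∈ (LinearMap.ker (ContinuousLinearMap.adjoint B : Y →ₗ[ℝ] X))ᗮ,
        ∃ v : X, B v = q ∧ ‖v‖ ^ 2 ≤ C * ‖q‖ ^ 2} C →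
      IsLeast {Γ : ℝ | ∀ (h : Y) (g : Z),
        h ∈ (LinearMap.ker (ContinuousLinearMap.adjoint B : Y →ₗ[ℝ] X))ᗮ →
        ContinuousLinearMap.adjoint B h = ContinuousLinearMap.adjoint R g →
        ‖h‖ ^ 2 ≤ Γ * ‖g‖ ^ 2} Γ →
      C = Γ + 1) := by
  constructor
  · constructor
    · rintro ⟨C, hC⟩
      refine ⟨max C 1 - 1, aux_easy B R hnorm (max C 1) (le_max_right _ _) ?_⟩
      intro q hq
      obtain ⟨v, hv, hvb⟩ := hC q hq
      exact ⟨v, hv, le_trans hvb (mul_le_mul_of_nonneg_right (le_max_left _ _) (sq_nonneg _))⟩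
    · rintro ⟨Γ, hΓ⟩
      refine ⟨max Γ 0 + 1, aux_exists B R hnorm (max Γ 0) (le_max_right _ _) ?_⟩
      intro h g hh hcon
      exact le_trans (hΓ h g hh hcon)
        (mul_le_mul_of_nonneg_right (le_max_left _ _) (sq_nonneg _))
  · intro C Γ hC hΓ
    have hKne : ∃ q : Y, q ∈ (LinearMap.ker (ContinuousLinearMap.adjoint B : Y →ₗ[ℝ] X))ᗮ ∧ q ≠ 0 := by
      by_contra hcon
      push_neg at hcon
      have hall : ∀ c : ℝ, c ∈ {C : ℝ | ∀ q ∈ (LinearMap.ker (ContinuousLinearMap.adjoint B : Y →ₗ[ℝ] X))ᗮ,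
          ∃ v : X, B v = q ∧ ‖v‖ ^ 2 ≤ C * ‖q‖ ^ 2} := by
        intro c q hq
        have hq0 : q = 0 := hcon q hq
        exact ⟨0, by simp [hq0]⟩
      have := hC.2 (hall (C - 1))
      linarith
    obtain ⟨q, hqK, hq0⟩ := hKne
    have hC1 : 1 ≤ C := by
      obtain ⟨v, hv, hvb⟩ := hC.1 q hqK
      have h3 := hnorm v
      rw [hv] at h3
      have hq2 : (0 : ℝ) < ‖q‖ ^ 2 := pow_pos (norm_pos_iff.mpr hq0) 2
      nlinarith [sq_nonneg ‖R v‖]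
    have hΓ0 : 0 ≤ Γ := by
      by_contra hneg
      push_neg at hneg
      have hall : ∀ c : ℝ, c ∈ {Γ : ℝ | ∀ (h : Y) (g : Z),
          h ∈ (LinearMap.ker (ContinuousLinearMap.adjoint B : Y →ₗ[ℝ] X))ᗮ →
          ContinuousLinearMap.adjoint B h = ContinuousLinearMap.adjoint R g →
          ‖h‖ ^ 2 ≤ Γ * ‖g‖ ^ 2} := by
        intro c h g hh hcon
        have h1 := hΓ.1 h g hh hcon
        have hg : g = 0 := by
          by_contra hg0
          have hg2 : (0 : ℝ) < ‖g‖ ^ 2 := pow_pos (norm_pos_iff.mpr hg0) 2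
          nlinarith [sq_nonneg ‖h‖]
        rw [hg] at h1 ⊢
        simp only [norm_zero] at h1 ⊢
        nlinarith [sq_nonneg ‖h‖]
      have := hΓ.2 (hall (Γ - 1))
      linarith
    have h1 : C ≤ Γ + 1 := hC.2 (aux_exists B R hnorm Γ hΓ0 hΓ.1)
    have h2 : Γ ≤ C - 1 := hΓ.2 (aux_easy B R hnorm C hC1 hC.1)
    linarith
end

section
/- (Cauchy–Schwarz step in part (i) of the equivalence proof.) Let X, Y, Z be Hilbert spaces with bounded B : X → Y, R : X → Z satisfying ‖v‖_X² = ‖Bv‖_Y² + ‖Rv‖_Z². Suppose h ∈ Y, g ∈ Z satisfy B*h = R*g, and u ∈ X satisfies Bu = h with ‖u‖_X² ≤ C‖h‖_Y². Then ‖h‖_Y² = ⟨g, Ru⟩_Z and consequently ‖h‖_Y² ≤ (C − 1)‖g‖_Z². -/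
open scoped RealInnerProductSpace

/-- Cauchy–Schwarz step in part (i) of the equivalence proof: if `B*h = R*g`, `Bu = h`
and `‖u‖² ≤ C‖h‖²`, then `‖h‖² = ⟪g, Ru⟫` and consequently `‖h‖² ≤ (C-1)‖g‖²`. -/
theorem cauchy_schwarz_step
    {X Y Z : Type*} [NormedAddCommGroup X] [InnerProductSpace ℝ X] [CompleteSpace X]
    [NormedAddCommGroup Y] [InnerProductSpace ℝ Y] [CompleteSpace Y]
    [NormedAddCommGroup Z] [InnerProductSpace ℝ Z] [CompleteSpace Z]
    (B : X →L[ℝ] Y) (R : X →L[ℝ] Z)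
    (hnorm : ∀ v : X, ‖v‖ ^ 2 = ‖B v‖ ^ 2 + ‖R v‖ ^ 2)
    (C : ℝ) (hC : 1 ≤ C) (h : Y) (g : Z) (u : X)
    (hconj : ContinuousLinearMap.adjoint B h = ContinuousLinearMap.adjoint R g)
    (hu : B u = h) (hbound : ‖u‖ ^ 2 ≤ C * ‖h‖ ^ 2) :
    ‖h‖ ^ 2 = ⟪g, R u⟫ ∧ ‖h‖ ^ 2 ≤ (C - 1) * ‖g‖ ^ 2 := by
  have key : ‖h‖ ^ 2 = ⟪g, R u⟫ := by
    have h1 : ⟪h, B u⟫ = ⟪g, R u⟫ := by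
      rw [← ContinuousLinearMap.adjoint_inner_left B, hconj,
        ContinuousLinearMap.adjoint_inner_left]
    rw [← h1, hu, real_inner_self_eq_norm_sq]
  refine ⟨key, ?_⟩
  have hRu : ‖R u‖ ^ 2 ≤ (C - 1) * ‖h‖ ^ 2 := by
    have := hnorm u
    rw [hu] at this
    nlinarith
  have hcs : ‖h‖ ^ 2 ≤ ‖g‖ * ‖R u‖ := by
    rw [key]; exact real_inner_le_norm g (R u)
  have hRu' : ‖R u‖ ^ 2 ≤ ((C - 1) * ‖h‖ ^ 2) := hRu
  -- (‖h‖^2)^2 ≤ ‖g‖^2 * ‖R u‖^2 ≤ ‖g‖^2 * (C-1)*‖h‖^2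
  rcases eq_or_ne (‖h‖ ^ 2) 0 with h0 | h0
  · rw [h0]; exact mul_nonneg (by linarith) (sq_nonneg _)
  · have hpos : 0 < ‖h‖ ^ 2 := lt_of_le_of_ne (by positivity) (Ne.symm h0)
    have h2 : (‖h‖ ^ 2) ^ 2 ≤ ‖g‖ ^ 2 * ‖R u‖ ^ 2 := by
      have := hcs
      nlinarith [norm_nonneg g, norm_nonneg (R u), norm_nonneg h]
    nlinarith [sq_nonneg (‖g‖), norm_nonneg g]
end
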